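/- Given a functor T with a free monad m_T (left adjoint to the forgetful functor from T-functor-algebras to C, composed back with the forgetful functor), every monad algebra structure a : m_T X → X induces a functor algebra structure T X → X via T η_X followed by the structure map of the free algebra on X followed by a; and conversely every functor algebra b : T Y → Y induces a monad algebra m_T Y → Y; these two constructions are mutually inverse, giving an isomorphism between the category of T-functor-algebras and the Eilenberg–Moore category of m_T. -/

import Mathlib

open CategoryTheory

universe v u

section Aux
variable {C : Type u} [Category.{v} C] (T : C ⥤ C) (Free : C ⥤ Endofunctor.Algebra T)
  (adj : Free ⊣ Endofunctor.Algebra.forget T)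

/-- The functor-algebra induced by a monad algebra. -/
def FMAux.Hobj (A : adj.toMonad.Algebra) : Endofunctor.Algebra T where
  a := A.A
  str := T.map (adj.unit.app A.A) ≫ (Free.obj A.A).str ≫ A.a

lemma FMAux.str_hom (A : adj.toMonad.Algebra) :
    T.map A.a ≫ (FMAux.Hobj T Free adj A).str = (Free.obj A.A).str ≫ A.a := by
  dsimp [FMAux.Hobj]
  rw [← Functor.map_comp_assoc]
  have h1 : A.a ≫ adj.unit.app A.A
      = adj.unit.app ((Free ⋙ Endofunctor.Algebra.forget T).obj A.A)
        ≫ (Free.map A.a).f := by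
    exact (adj.unit.naturality A.a)
  erw [h1, Functor.map_comp_assoc, (Free.map A.a).h_assoc]
  have h3 : (Free.map A.a).f ≫ A.a
      = (adj.counit.app (Free.obj A.A)).f ≫ A.a := by
    have := A.assoc
    dsimp at this
    exact this.symm
  rw [h3]
  erw [← (adj.counit.app (Free.obj A.A)).h_assoc]
  refine Eq.trans (T.map_comp_assoc _ _ _).symm ?_
  have h4 : adj.unit.app ((Free ⋙ Endofunctor.Algebra.forget T).obj A.A)
      ≫ (adj.counit.app (Free.obj A.A)).f = 𝟙 _ := adj.right_triangle_components _
  erw [h4]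
  simp
  erw [T.map_id]
  exact Category.id_comp _

lemma FMAux.counit_f (A : adj.toMonad.Algebra) :
    (adj.counit.app (FMAux.Hobj T Free adj A)).f = A.a := by
  let k : Free.obj A.A ⟶ FMAux.Hobj T Free adj A :=
    ⟨A.a, FMAux.str_hom T Free adj A⟩
  have hk : adj.counit.app (FMAux.Hobj T Free adj A) = k := by
    apply (adj.homEquiv A.A (FMAux.Hobj T Free adj A)).injective
    erw [Adjunction.homEquiv_unit, Adjunction.homEquiv_unit]
    have h1 : adj.unit.app A.A ≫ (Endofunctor.Algebra.forget T).map
        (adj.counit.app (FMAux.Hobj T Free adj A)) = 𝟙 A.A :=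
      adj.right_triangle_components (FMAux.Hobj T Free adj A)
    rw [h1]
    exact A.unit.symm
  exact congrArg Endofunctor.Algebra.Hom.f hk

end Aux

section Aux2
variable {C : Type u} [Category.{v} C] (T : C ⥤ C) (Free : C ⥤ Endofunctor.Algebra T)
  (adj : Free ⊣ Endofunctor.Algebra.forget T)

/-- The functor from monad algebras to functor algebras. -/
def FMAux.H : adj.toMonad.Algebra ⥤ Endofunctor.Algebra T where
  obj A := FMAux.Hobj T Free adj A
  map {A A'} f :=
    { f := f.f
      h := by
        dsimp [FMAux.Hobj]
        rw [← Functor.map_comp_assoc]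
        have h1 : f.f ≫ adj.unit.app A'.A
            = adj.unit.app A.A ≫ (Free.map f.f).f := by
          exact adj.unit.naturality f.f
        erw [h1, Functor.map_comp_assoc, (Free.map f.f).h_assoc]
        have h2 : (Free.map f.f).f ≫ A'.a = A.a ≫ f.f := f.h
        rw [h2]
        simp
        erw [Category.assoc]
        rfl }
  map_id A := by ext; rfl
  map_comp f g := by ext; rfl

lemma FMAux.HG_obj (B : Endofunctor.Algebra T) :
    FMAux.Hobj T Free adj ((Monad.comparison adj).obj B) = B := by
  obtain ⟨Ba, Bstr⟩ := B
  dsimp [FMAux.Hobj]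
  congr 1
  have h1 : adj.unit.app Ba ≫ (adj.counit.app
      (⟨Ba, Bstr⟩ : Endofunctor.Algebra T)).f = 𝟙 Ba :=
    adj.right_triangle_components (⟨Ba, Bstr⟩ : Endofunctor.Algebra T)
  have h2 : T.map (adj.counit.app (⟨Ba, Bstr⟩ : Endofunctor.Algebra T)).f ≫ Bstr
      = (Free.obj Ba).str ≫ (adj.counit.app (⟨Ba, Bstr⟩ : Endofunctor.Algebra T)).f :=
    (adj.counit.app (⟨Ba, Bstr⟩ : Endofunctor.Algebra T)).h
  erw [← h2, ← Functor.map_comp_assoc, h1]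
  simp
  erw [T.map_id]
  exact Category.id_comp _

end Aux2

section Aux3
variable {C : Type u} [Category.{v} C] (T : C ⥤ C) (Free : C ⥤ Endofunctor.Algebra T)
  (adj : Free ⊣ Endofunctor.Algebra.forget T)

lemma FMAux.malg_ext {M : Monad C} (X Y : M.Algebra) (h1 : X.A = Y.A)
    (h2 : HEq X.a Y.a) : X = Y := by
  obtain ⟨XA, Xa, _, _⟩ := X
  obtain ⟨YA, Ya, _, _⟩ := Y
  dsimp at h1 h2
  cases h1
  cases h2
  rfl

lemma FMAux.GH_obj (A : adj.toMonad.Algebra) :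
    (Monad.comparison adj).obj ((FMAux.H T Free adj).obj A) = A :=
  FMAux.malg_ext _ _ rfl (heq_of_eq (FMAux.counit_f T Free adj A))

lemma FMAux.eqToHom_f_endo {X Y : Endofunctor.Algebra T} (h : X = Y) :
    (eqToHom h).f = eqToHom (congrArg Endofunctor.Algebra.a h) := by subst h; rfl

lemma FMAux.eqToHom_f_monad {M : Monad C} {X Y : M.Algebra} (h : X = Y) :
    (eqToHom h).f = eqToHom (congrArg Monad.Algebra.A h) := by subst h; rfl

lemma FMAux.test1 : Monad.comparison adj ⋙ FMAux.H T Free adj = 𝟭 (Endofunctor.Algebra T) := by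
  refine CategoryTheory.Functor.ext (fun B => FMAux.HG_obj T Free adj B) (fun X Y f => ?_)
  apply Endofunctor.Algebra.Hom.ext
  simp [FMAux.H, FMAux.eqToHom_f_endo]
  erw [FMAux.eqToHom_f_endo]
  erw [eqToHom_refl, eqToHom_refl, Category.id_comp, Category.comp_id]

lemma FMAux.test2 : FMAux.H T Free adj ⋙ Monad.comparison adj = 𝟭 adj.toMonad.Algebra := by
  refine CategoryTheory.Functor.ext (fun A => FMAux.GH_obj T Free adj A) (fun X Y f => ?_)
  apply Monad.Algebra.Hom.ext
  simp [FMAux.H, FMAux.eqToHom_f_monad]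
  erw [FMAux.eqToHom_f_monad, FMAux.eqToHom_f_monad]
  erw [eqToHom_refl, eqToHom_refl, Category.id_comp, Category.comp_id]

end Aux3

/-- let `C` be complete and locally small and `T : C ⥤ C` an endofunctor
admitting a free monad `m_T` (i.e. the forgetful functor from `T`-functor-algebras has a
left adjoint `Free`, and `m_T = Free ⋙ forget` with the adjunction-induced monad
structure).  Then the category of `T`-functor-algebras is isomorphic to the
Eilenberg–Moore category of `m_T`, via the mutually inverse constructions sending a monad
algebra `(A, a)` to the functor algebra with structure map `T η_A ≫ str ≫ a`, and a
functor algebra `(B, b)` to the monad algebra whose structure map is the image under the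
forgetful functor of the adjunction counit. -/
theorem free_monad_algebras_iso {C : Type u} [Category.{v} C] [Limits.HasLimits C]
    (T : C ⥤ C) (Free : C ⥤ Endofunctor.Algebra T)
    (adj : Free ⊣ Endofunctor.Algebra.forget T) :
    ∃ (G : Endofunctor.Algebra T ⥤ adj.toMonad.Algebra)
      (H : adj.toMonad.Algebra ⥤ Endofunctor.Algebra T),
      G ⋙ H = 𝟭 _ ∧ H ⋙ G = 𝟭 _ ∧
      G ⋙ adj.toMonad.forget = Endofunctor.Algebra.forget T ∧
      H ⋙ Endofunctor.Algebra.forget T = adj.toMonad.forget ∧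
      (∀ B : Endofunctor.Algebra T,
        (G.obj B).A = B.a ∧
        HEq (G.obj B).a ((Endofunctor.Algebra.forget T).map (adj.counit.app B))) ∧
      (∀ A : adj.toMonad.Algebra,
        (H.obj A).a = A.A ∧
        HEq (H.obj A).str
          (T.map (adj.unit.app A.A) ≫ (Free.obj A.A).str ≫ A.a)) := by
  refine ⟨Monad.comparison adj, FMAux.H T Free adj,
    FMAux.test1 T Free adj, FMAux.test2 T Free adj, rfl, rfl,
    fun B => ⟨rfl, HEq.rfl⟩, fun A => ⟨rfl, HEq.rfl⟩⟩
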